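/- Let P be a ℂ-vector space and P₁ a subspace of P. Suppose λ₁, λ₂, …, λ_s ∈ ℂ* are pairwise distinct, v_{i,j} ∈ P, and f_{i,j}(t) ∈ ℂ[t] are polynomials with deg f_{i,j} = j, for i = 1, …, s and j = 0, 1, …, k. If Σ_{i=1}^s Σ_{j=0}^k λ_i^m f_{i,j}(m) v_{i,j} ∈ P₁ for all m ∈ ℤ, then v_{i,j} ∈ P₁ for all i and j. -/

import Mathlib

/-- A representation of the Witt algebra `𝔚 = span{d_i : i ≥ -1}`, encoded by the family of
operators `d i` (only the indices `i ≥ -1` are relevant) satisfying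
`[d_m, d_n] = (n - m) d_{m+n}`. -/
structure WittRep (W : Type*) [AddCommGroup W] [Module ℂ W] where
  d : ℤ → W →ₗ[ℂ] W
  comm : ∀ m n : ℤ, -1 ≤ m → -1 ≤ n →
    d m ∘ₗ d n - d n ∘ₗ d m = (((n - m : ℤ) : ℂ)) • d (m + n)

namespace WittRep

variable {W : Type*} [AddCommGroup W] [Module ℂ W]

/-- Condition A : the module lies in the category `O_𝔚`. -/
def InO (ρ : WittRep W) : Prop :=
  ∀ v : W, ∃ n : ℕ, ∀ i : ℤ, (n : ℤ) ≤ i → ρ.d i v = 0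

/-- The module is trivial: the Lie algebra acts by zero. -/
def IsTrivial (ρ : WittRep W) : Prop := ∀ i : ℤ, -1 ≤ i → ρ.d i = 0

/-- A `𝔚`-submodule. -/
def Invariant (ρ : WittRep W) (U : Submodule ℂ W) : Prop :=
  ∀ i : ℤ, -1 ≤ i → ∀ u ∈ U, ρ.d i u ∈ U

/-- Simplicity of a `𝔚`-module. -/
def IsSimple (ρ : WittRep W) : Prop :=
  (∃ v : W, v ≠ 0) ∧ ∀ U : Submodule ℂ W, ρ.Invariant U → U = ⊥ ∨ U = ⊤

/-- A `𝔟`-submodule (`𝔟 = span{d_i : i ≥ 0}`). -/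
def BInvariant (ρ : WittRep W) (U : Submodule ℂ W) : Prop :=
  ∀ i : ℤ, 0 ≤ i → ∀ u ∈ U, ρ.d i u ∈ U

/-- The socle `Soc_𝔟(W)`: the sum of the minimal nonzero `𝔟`-submodules. -/
def Soc (ρ : WittRep W) : Submodule ℂ W :=
  sSup {U | ρ.BInvariant U ∧ U ≠ ⊥ ∧
    ∀ U' : Submodule ℂ W, ρ.BInvariant U' → U' ≠ ⊥ → U' ≤ U → U' = U}

/-- `w₀` is a highest weight vector of weight `b'`. -/
def IsHW (ρ : WittRep W) (w₀ : W) (b' : ℂ) : Prop :=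
  w₀ ≠ 0 ∧ ρ.d 0 w₀ = b' • w₀ ∧ ∀ i : ℤ, 1 ≤ i → ρ.d i w₀ = 0

/-- `w₀` generates the `𝔚`-module. -/
def Generates (ρ : WittRep W) (w₀ : W) : Prop :=
  ∀ U : Submodule ℂ W, ρ.Invariant U → w₀ ∈ U → U = ⊤

/-- The operator `e^{kt} d/dt = Σ_{i ≥ 0} (k^i/i!) d_{i-1}` (a finite sum on each vector of a
module in `O_𝔚`). -/
noncomputable def E (ρ : WittRep W) (k : ℤ) (w : W) : W :=
  ∑ᶠ i : ℕ, (((k : ℂ) ^ i) / (Nat.factorial i : ℂ)) • ρ.d ((i : ℤ) - 1) w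

/-- The action of `d_k` on `L(W, λ, a, b) = W ⊗ ℂ[t, t⁻¹]`, realized on `ℤ →₀ W`
(`w ⊗ t^j ↦ Finsupp.single j w`):
`d_k · (w ⊗ t^j) = ((λ^k e^{kt} − 1) d/dt + a + kb + j) w ⊗ t^{k+j}`. -/
noncomputable def Lact (ρ : WittRep W) (lam a b : ℂ) (k : ℤ) (f : ℤ →₀ W) : ℤ →₀ W :=
  f.sum fun j w => Finsupp.single (k + j)
    (lam ^ k • ρ.E k w - ρ.d (-1) w + (a + (k : ℂ) * b + (j : ℂ)) • w)

/-- The PBW map `ℕ →₀ ℂ → W`, `(k, c) ↦ c • d_{-1}^k w₀`. -/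
noncomputable def pbwMap (ρ : WittRep W) (w₀ : W) : (ℕ →₀ ℂ) →ₗ[ℂ] W :=
  Finsupp.lsum ℂ fun k : ℕ => ((ρ.d (-1)) ^ k) ∘ₗ LinearMap.toSpanSingleton ℂ W w₀

/-- `W` is the Verma `𝔚`-module with highest weight vector `w₀` of highest weight `b'`. -/
def IsVerma (ρ : WittRep W) (w₀ : W) (b' : ℂ) : Prop :=
  ρ.d 0 w₀ = b' • w₀ ∧ (∀ i : ℤ, 1 ≤ i → ρ.d i w₀ = 0) ∧
    Function.Bijective (ρ.pbwMap w₀)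

/-- `W^{(n)} = Σ_{i=0}^n d_{-1}^i (Soc_𝔟 W)`. -/
noncomputable def Wn (ρ : WittRep W) (n : ℕ) : Submodule ℂ W :=
  ⨆ i : Fin (n + 1), Submodule.map ((ρ.d (-1)) ^ (i : ℕ)) ρ.Soc

/-- `L₀(a, b') = span{d₁^i · (w₀ ⊗ t^{2j})} ⊆ L(W, -1, a, b' + 1)`. -/
noncomputable def Lzero (ρ : WittRep W) (a b' : ℂ) (w₀ : W) : Submodule ℂ (ℤ →₀ W) :=
  Submodule.span ℂ
    {g | ∃ (i : ℕ) (j : ℤ), g = (ρ.Lact (-1) a (b' + 1) 1)^[i] (Finsupp.single (2 * j) w₀)}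

/-- `L₁(a, b') = span{d₁^i · (w₀ ⊗ t^{2j+1})} ⊆ L(W, -1, a, b' + 1)`. -/
noncomputable def Lone (ρ : WittRep W) (a b' : ℂ) (w₀ : W) : Submodule ℂ (ℤ →₀ W) :=
  Submodule.span ℂ
    {g | ∃ (i : ℕ) (j : ℤ), g = (ρ.Lact (-1) a (b' + 1) 1)^[i] (Finsupp.single (2 * j + 1) w₀)}

end WittRep

/-- A representation of the Lie algebra `𝔟 = span{d_i : i ≥ 0}`. -/
structure BRep (B : Type*) [AddCommGroup B] [Module ℂ B] where
  d : ℕ → B →ₗ[ℂ] B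
  comm : ∀ m n : ℕ, d m ∘ₗ d n - d n ∘ₗ d m = (((n : ℂ) - (m : ℂ))) • d (m + n)

namespace BRep

variable {B : Type*} [AddCommGroup B] [Module ℂ B]

/-- Condition A : the module lies in the category `O_𝔟`. -/
def InO (ρ : BRep B) : Prop := ∀ v : B, ∃ n : ℕ, ∀ i : ℕ, n ≤ i → ρ.d i v = 0

def IsTrivial (ρ : BRep B) : Prop := ∀ i : ℕ, ρ.d i = 0

def IsSimple (ρ : BRep B) : Prop :=
  (∃ v : B, v ≠ 0) ∧
    ∀ U : Submodule ℂ B, (∀ i : ℕ, ∀ u ∈ U, ρ.d i u ∈ U) → U = ⊥ ∨ U = ⊤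

/-- The set of `r ∈ ℤ≥0` such that `d_{r+i} v = 0` for all `i ≥ 1`;
`ord_𝔟(v)` is its least element. -/
def ordSet (ρ : BRep B) (v : B) : Set ℕ := {r : ℕ | ∀ i : ℕ, r + 1 ≤ i → ρ.d i v = 0}

/-- The action of `d_m` on the Virasoro module `N(B_(c), a) = B ⊗ ℂ[t, t⁻¹]`, realized on
`ℤ →₀ B`:  `d_m · (w ⊗ t^j) = (Σ_{i≥1} (m^i/i!) d_{i-1} + mc + a + j) w ⊗ t^{m+j}`
(`c` is the twist of the `d₀`-action; `c = 0` gives `N(B, a)`). -/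
noncomputable def Nact (ρ : BRep B) (a c : ℂ) (m : ℤ) (f : ℤ →₀ B) : ℤ →₀ B :=
  f.sum fun j w => Finsupp.single (m + j)
    ((∑ᶠ i : ℕ, (((m : ℂ) ^ (i + 1)) / (Nat.factorial (i + 1) : ℂ)) • ρ.d i w) +
      ((m : ℂ) * c + a + (j : ℂ)) • w)

end BRep

/-- For a family `U : ℤ → Submodule ℂ W`, the subspace `⊕_j U j ⊗ t^j` of `W ⊗ ℂ[t,t⁻¹]`. -/
def gradedSub {W : Type*} [AddCommGroup W] [Module ℂ W] (U : ℤ → Submodule ℂ W) :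
    Submodule ℂ (ℤ →₀ W) where
  carrier := {f | ∀ j, f j ∈ U j}
  add_mem' := fun hf hg j => by
    simpa only [Finsupp.add_apply] using (U j).add_mem (hf j) (hg j)
  zero_mem' := fun j => by simp
  smul_mem' := fun c f hf j => by
    simpa only [Finsupp.smul_apply] using (U j).smul_mem c (hf j)

/-- A submodule invariant under a (ℤ-indexed) family of operators. -/
def ActInvariant {V : Type*} [AddCommGroup V] [Module ℂ V] (act : ℤ → V → V)
    (M : Submodule ℂ V) : Prop :=
  ∀ k : ℤ, ∀ u ∈ M, act k u ∈ M

/-- Simplicity of the module given by a family of operators (the central element acts by zero). -/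
def ActSimple {V : Type*} [AddCommGroup V] [Module ℂ V] (act : ℤ → V → V) : Prop :=
  (∃ v : V, v ≠ 0) ∧ ∀ M : Submodule ℂ V, ActInvariant act M → M = ⊥ ∨ M = ⊤

/-- A representation of the Virasoro algebra. -/
structure VirasoroRep (V : Type*) [AddCommGroup V] [Module ℂ V] where
  d : ℤ → V →ₗ[ℂ] V
  z : V →ₗ[ℂ] V
  comm : ∀ m n : ℤ, d m ∘ₗ d n - d n ∘ₗ d m =
    (((n - m : ℤ) : ℂ)) • d (m + n) +
      (if m + n = 0 then (((n : ℂ) ^ 3 - (n : ℂ)) / 12) else 0) • z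
  comm_z : ∀ m : ℤ, d m ∘ₗ z = z ∘ₗ d m


open Polynomial in
private lemma tcoeff_aux (p : ℂ[X]) (d : ℕ) :
    (taylor 1 p).coeff d
      = ∑ i ∈ Finset.range (p.natDegree + 2), ((i + d).choose d : ℂ) * p.coeff (i + d) := by
  have hb : (hasseDeriv d p).natDegree < p.natDegree + 2 :=
    lt_of_le_of_lt ((natDegree_hasseDeriv_le p d).trans (Nat.sub_le _ _)) (by omega)
  rw [taylor_coeff, eval_eq_sum_range' hb]
  simp [hasseDeriv_coeff]

open Polynomial in
private lemma tcoeff_top (p : ℂ[X]) (d : ℕ) (h : ∀ j, d < j → p.coeff j = 0) :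
    (taylor 1 p).coeff d = p.coeff d := by
  rw [tcoeff_aux]
  rw [Finset.sum_eq_single 0]
  · simp
  · intro i _ hi
    rw [h (i + d) (by omega), mul_zero]
  · intro h0
    exact absurd (Finset.mem_range.2 (by omega)) h0

open Polynomial in
private lemma tcoeff_sub (p : ℂ[X]) (d : ℕ) (h : ∀ j, d + 1 < j → p.coeff j = 0) :
    (taylor 1 p).coeff d = p.coeff d + ((d : ℂ) + 1) * p.coeff (d + 1) := by
  rw [tcoeff_aux, Finset.sum_range_succ', Finset.sum_range_succ']
  have hz : ∀ i ∈ Finset.range p.natDegree,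
      ((i + 1 + 1 + d).choose d : ℂ) * p.coeff (i + 1 + 1 + d) = 0 := by
    intro i _
    rw [h (i + 1 + 1 + d) (by omega), mul_zero]
  rw [Finset.sum_eq_zero hz]
  simp [Nat.choose_succ_self_right, add_comm]
  try ring

open Polynomial in
private lemma degA (p : ℂ[X]) (n : ℕ) (hp : p.degree = (n : WithBot ℕ)) (c μ : ℂ)
    (hcμ : c ≠ μ) : (c • taylor 1 p - μ • p).degree = (n : WithBot ℕ) := by
  have hco : ∀ j, n < j → p.coeff j = 0 := by
    intro j hj
    exact coeff_eq_zero_of_degree_lt (by rw [hp]; exact_mod_cast hj)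
  have htop : ∀ j, n ≤ j → (taylor 1 p).coeff j = p.coeff j := by
    intro j hj
    exact tcoeff_top p j (fun i hi => hco i (by omega))
  have hcn : p.coeff n ≠ 0 := by
    have hpz : p ≠ 0 := fun h => by simp [h] at hp
    have : p.natDegree = n := natDegree_eq_of_degree_eq_some hp
    rw [← this]
    exact mt leadingCoeff_eq_zero.1 hpz
  apply le_antisymm
  · rw [degree_le_iff_coeff_zero]
    intro m hm
    have hnm : n < m := by exact_mod_cast hm
    simp [coeff_sub, coeff_smul, htop m hnm.le, hco m hnm, smul_eq_mul]
  · apply le_degree_of_ne_zero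
    simp only [coeff_sub, coeff_smul, htop n le_rfl, smul_eq_mul]
    rw [← sub_mul]
    exact mul_ne_zero (sub_ne_zero.2 hcμ) hcn

open Polynomial in
private lemma degB (p : ℂ[X]) (n : ℕ) (hp : p.degree < ((n + 1 : ℕ) : WithBot ℕ)) (c μ : ℂ)
    (hcμ : c = μ) : (c • taylor 1 p - μ • p).degree < (n : WithBot ℕ) := by
  rw [degree_lt_iff_coeff_zero] at hp ⊢
  intro m hm
  have h1 : ∀ j, m < j → p.coeff j = 0 := fun j hj => hp j (by omega)
  have h2 : p.coeff m = p.coeff m := rfl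
  simp [coeff_sub, coeff_smul, tcoeff_top p m h1, smul_eq_mul, hcμ]

open Polynomial in
private lemma deg_zero_of_lt (q : ℂ[X]) (h : q.degree < ((0 : ℕ) : WithBot ℕ)) : q = 0 := by
  rw [degree_lt_iff_coeff_zero] at h
  ext n
  simpa using h n (Nat.zero_le n)

open Polynomial in
private lemma degC (p : ℂ[X]) (n : ℕ) (hp : p.degree = ((n + 1 : ℕ) : WithBot ℕ)) :
    (taylor 1 p - p).degree = (n : WithBot ℕ) := by
  have hco : ∀ j, n + 1 < j → p.coeff j = 0 := by
    intro j hj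
    exact coeff_eq_zero_of_degree_lt (by rw [hp]; exact_mod_cast hj)
  have hcn : p.coeff (n + 1) ≠ 0 := by
    have hpz : p ≠ 0 := by
      intro h
      rw [degree_eq_bot.2 h] at hp
      exact WithBot.bot_ne_coe hp
    have : p.natDegree = n + 1 := natDegree_eq_of_degree_eq_some hp
    rw [← this]
    exact mt leadingCoeff_eq_zero.1 hpz
  apply le_antisymm
  · rw [degree_le_iff_coeff_zero]
    intro m hm
    have hnm : n < m := by exact_mod_cast hm
    have htop : (taylor 1 p).coeff m = p.coeff m :=
      tcoeff_top p m (fun i hi => hco i (by omega))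
    simp [coeff_sub, htop]
  · apply le_degree_of_ne_zero
    rw [coeff_sub, tcoeff_sub p n hco]
    have : (n : ℂ) + 1 ≠ 0 := by
      exact_mod_cast Nat.cast_add_one_ne_zero (R := ℂ) n
    simp only [add_sub_cancel_left]
    exact mul_ne_zero this hcn

private lemma smul_mem_cancel {P : Type*} [AddCommGroup P] [Module ℂ P] (P₁ : Submodule ℂ P)
    {a : ℂ} (ha : a ≠ 0) {x : P} (h : a • x ∈ P₁) : x ∈ P₁ := by
  have := P₁.smul_mem a⁻¹ h
  rwa [smul_smul, inv_mul_cancel₀ ha, one_smul] at this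

open Polynomial in
private lemma eval_ne_zero_of_deg_zero (p : ℂ[X]) (h : p.degree = ((0 : ℕ) : WithBot ℕ))
    (x : ℂ) : p.eval x ≠ 0 := by
  have hp := eq_C_of_degree_le_zero (le_of_eq h)
  intro hx
  rw [hp, eval_C] at hx
  rw [hp, hx, map_zero] at h
  simp at h

open Polynomial in
private lemma polyCase {P : Type*} [AddCommGroup P] [Module ℂ P] (P₁ : Submodule ℂ P) :
    ∀ (k : ℕ) (v : Fin (k + 1) → P) (f : Fin (k + 1) → ℂ[X]),
      (∀ j, (f j).degree = ((j : ℕ) : WithBot ℕ)) →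
      (∀ m : ℤ, (∑ j, ((f j).eval (m : ℂ)) • v j) ∈ P₁) → ∀ j, v j ∈ P₁ := by
  intro k
  induction k with
  | zero =>
    intro v f hdeg hmem j
    have h0 := hmem 0
    rw [Fin.sum_univ_one] at h0
    have := smul_mem_cancel P₁ (eval_ne_zero_of_deg_zero (f 0) (hdeg 0) (((0 : ℤ) : ℂ))) h0
    have hj : j = 0 := by omega
    rwa [hj]
  | succ k ih =>
    intro v f hdeg hmem
    have hmem' : ∀ m : ℤ,
        (∑ j : Fin (k + 2), ((taylor 1 (f j) - f j).eval (m : ℂ)) • v j) ∈ P₁ := by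
      intro m
      have h1 := hmem (m + 1)
      have := P₁.sub_mem h1 (hmem m)
      rw [← Finset.sum_sub_distrib] at this
      convert this using 2 with j
      rw [← sub_smul, eval_sub, taylor_eval]
      push_cast
      ring_nf
    have h0poly : taylor 1 (f 0) - f 0 = 0 := by
      apply deg_zero_of_lt
      have := degB (f 0) 0 (by rw [hdeg 0]; exact_mod_cast Nat.lt_succ_self 0) 1 1 rfl
      simpa using this
    have htail := ih (fun j => v j.succ) (fun j => taylor 1 (f j.succ) - f j.succ)
      (fun j => by
        have := degC (f j.succ) (j : ℕ) (by rw [hdeg j.succ]; norm_cast)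
        exact this)
      (fun m => by
        have := hmem' m
        rw [Fin.sum_univ_succ, h0poly] at this
        simpa using this)
    intro j
    refine Fin.cases ?_ (fun j => htail j) j
    have h00 := hmem 0
    rw [Fin.sum_univ_succ] at h00
    have hrest : (∑ j : Fin (k + 1), ((f j.succ).eval (((0 : ℤ) : ℂ))) • v j.succ) ∈ P₁ :=
      Submodule.sum_mem _ fun j _ => P₁.smul_mem _ (htail j)
    have hv0 : ((f 0).eval (((0 : ℤ) : ℂ))) • v 0 ∈ P₁ := by
      have := P₁.sub_mem h00 hrest
      simpa using this
    exact smul_mem_cancel P₁ (eval_ne_zero_of_deg_zero (f 0) (hdeg 0) (((0 : ℤ) : ℂ))) hv0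

open Polynomial in
private lemma step_mem {P : Type*} [AddCommGroup P] [Module ℂ P] (P₁ : Submodule ℂ P)
    {s k : ℕ} (lam : Fin s → ℂ) (hne : ∀ i, lam i ≠ 0) (μ : ℂ)
    (v : Fin s → Fin (k + 1) → P) (f : Fin s → Fin (k + 1) → ℂ[X])
    (h : ∀ m : ℤ, (∑ i, ∑ j, (lam i ^ m * (f i j).eval (m : ℂ)) • v i j) ∈ P₁) :
    ∀ m : ℤ, (∑ i, ∑ j,
      (lam i ^ m * ((lam i • taylor 1 (f i j) - μ • f i j)).eval (m : ℂ)) • v i j) ∈ P₁ := by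
  intro m
  have hmm := P₁.sub_mem (h (m + 1)) (P₁.smul_mem μ (h m))
  rw [Finset.smul_sum, ← Finset.sum_sub_distrib] at hmm
  convert hmm using 2 with i _
  rw [Finset.smul_sum, ← Finset.sum_sub_distrib]
  apply Finset.sum_congr rfl
  intro j _
  rw [eval_sub, eval_smul, eval_smul, taylor_eval, smul_eq_mul, smul_eq_mul,
    zpow_add_one₀ (hne i), smul_smul, ← sub_smul]
  congr 1
  push_cast
  ring

open Polynomial in
private lemma multiCase {P : Type*} [AddCommGroup P] [Module ℂ P] (P₁ : Submodule ℂ P) :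
    ∀ (s k : ℕ) (lam : Fin s → ℂ), (∀ i, lam i ≠ 0) → Function.Injective lam →
      ∀ (v : Fin s → Fin (k + 1) → P) (f : Fin s → Fin (k + 1) → ℂ[X]),
      (∀ i j, (f i j).degree = ((j : ℕ) : WithBot ℕ)) →
      (∀ m : ℤ, (∑ i, ∑ j, (lam i ^ m * (f i j).eval (m : ℂ)) • v i j) ∈ P₁) →
      ∀ i j, v i j ∈ P₁ := by
  intro s
  induction s with
  | zero => intro k lam _ _ v f _ _ i; exact i.elim0
  | succ s ih =>
    intro k lam hne hinj v f hdeg hmem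
    set μ := lam (Fin.last s) with hμ
    set T : Fin (s + 1) → ℂ[X] → ℂ[X] := fun i p => lam i • taylor 1 p - μ • p with hT
    set g : ℕ → Fin (s + 1) → Fin (k + 1) → ℂ[X] := fun n i j => (T i)^[n] (f i j) with hg
    have hgsucc : ∀ n i j, g (n + 1) i j = lam i • taylor 1 (g n i j) - μ • g n i j := by
      intro n i j
      rw [hg]
      simp only [Function.iterate_succ_apply']
      rfl
    have hg_mem : ∀ n, ∀ m : ℤ,
        (∑ i, ∑ j, (lam i ^ m * ((g n i j).eval (m : ℂ))) • v i j) ∈ P₁ := by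
      intro n
      induction n with
      | zero => simpa [hg] using hmem
      | succ n ihn =>
        intro m
        have := step_mem P₁ lam hne μ v (fun i j => g n i j) ihn m
        simpa [hgsucc] using this
    have hg_deg : ∀ n (i : Fin (s + 1)) j, i ≠ Fin.last s →
        (g n i j).degree = ((j : ℕ) : WithBot ℕ) := by
      intro n
      induction n with
      | zero => intro i j _; simpa [hg] using hdeg i j
      | succ n ihn =>
        intro i j hi
        rw [hgsucc]
        exact degA _ _ (ihn i j hi) _ _ (fun h => hi (hinj h))
    have hg_last : ∀ n, n ≤ k + 1 → ∀ j,
        (g n (Fin.last s) j).degree < ((k + 1 - n : ℕ) : WithBot ℕ) := by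
      intro n
      induction n with
      | zero =>
        intro _ j
        rw [hg]
        simp only [Function.iterate_zero, id]
        rw [hdeg]
        exact_mod_cast j.isLt
      | succ n ihn =>
        intro hn j
        have hn' : n ≤ k := by omega
        have hkk : k + 1 - n = (k - n) + 1 := by omega
        have := ihn (by omega) j
        rw [hkk] at this
        have := degB _ _ this (lam (Fin.last s)) μ rfl
        rw [hgsucc]
        have hkk2 : k + 1 - (n + 1) = k - n := by omega
        rw [hkk2]
        exact this
    have hzero : ∀ j, g (k + 1) (Fin.last s) j = 0 := by
      intro j
      apply deg_zero_of_lt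
      have := hg_last (k + 1) le_rfl j
      simpa using this
    have hsplit : ∀ m : ℤ, (∑ i : Fin s, ∑ j,
        (lam i.castSucc ^ m * ((g (k + 1) i.castSucc j).eval (m : ℂ))) • v i.castSucc j) ∈ P₁ := by
      intro m
      have := hg_mem (k + 1) m
      rw [Fin.sum_univ_castSucc] at this
      simpa [hzero] using this
    have hIH : ∀ (i : Fin s) j, v i.castSucc j ∈ P₁ :=
      ih k (fun i => lam i.castSucc) (fun i => hne _)
        (hinj.comp (Fin.castSucc_injective s))
        (fun i j => v i.castSucc j) (fun i j => g (k + 1) i.castSucc j)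
        (fun i j => hg_deg (k + 1) i.castSucc j (Fin.castSucc_lt_last i).ne) hsplit
    have hlastsum : ∀ m : ℤ,
        (∑ j, ((f (Fin.last s) j).eval (m : ℂ)) • v (Fin.last s) j) ∈ P₁ := by
      intro m
      have h1 := hmem m
      rw [Fin.sum_univ_castSucc] at h1
      have h2 : (∑ i : Fin s, ∑ j,
          (lam i.castSucc ^ m * (f i.castSucc j).eval (m : ℂ)) • v i.castSucc j) ∈ P₁ :=
        Submodule.sum_mem _ fun i _ => Submodule.sum_mem _ fun j _ =>
          P₁.smul_mem _ (hIH i j)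
      have h3 := P₁.sub_mem h1 h2
      rw [add_sub_cancel_left] at h3
      have h4 := P₁.smul_mem (μ ^ (-m)) h3
      rw [Finset.smul_sum] at h4
      convert h4 using 2 with j
      rw [smul_smul, ← mul_assoc, zpow_neg, inv_mul_cancel₀ (zpow_ne_zero _ (hne _)), one_mul]
    have hlast : ∀ j, v (Fin.last s) j ∈ P₁ :=
      polyCase P₁ k (v (Fin.last s)) (f (Fin.last s)) (hdeg _) hlastsum
    intro i
    refine Fin.lastCases ?_ ?_ i
    · exact hlast
    · exact hIH

theorem stmt6 {P : Type*} [AddCommGroup P] [Module ℂ P] (P₁ : Submodule ℂ P)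
    (s k : ℕ) (lam : Fin s → ℂ) (hne : ∀ i, lam i ≠ 0) (hinj : Function.Injective lam)
    (v : Fin s → Fin (k + 1) → P) (f : Fin s → Fin (k + 1) → Polynomial ℂ)
    (hdeg : ∀ i j, (f i j).degree = ((j : ℕ) : WithBot ℕ))
    (hmem : ∀ m : ℤ, (∑ i, ∑ j, (lam i ^ m * (f i j).eval (m : ℂ)) • v i j) ∈ P₁) :
    ∀ i j, v i j ∈ P₁ := by
  exact multiCase P₁ s k lam hne hinj v f hdeg hmem
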